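/- Let μ : A → F be an additive map. Then the linear map ξ_μ on D₁ defined by ξ_μ(L(x)) = μ(x)·L(x) and ξ_μ(I(x)) = μ(x)·I(x) for all x ∈ A is a derivation of D₁. Moreover, if μ = k·∂ for some k ∈ F, then ξ_μ equals the inner derivation ad(k·L(0)). -/
import Mathlib


/-- For an additive map `μ : A → F`, the linear map `ξ_μ` on `D₁` with
`ξ_μ(L x) = μ(x)·L(x)` and `ξ_μ(I x) = μ(x)·I(x)` is a derivation of `D₁`; moreover, if
`μ = k·∂` for some `k ∈ F`, then `ξ_μ` is the inner derivation `ad(k·L(0)) = ad(k·∂)`. -/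
theorem stmt_13 {F : Type*} [Field F] [CharZero F]
    {A : Type*} [AddCommGroup A]
    (d : A →+ F) (hd : ∀ x : A, d x = 0 → x = 0)
    {D : Type*} [LieRing D] [LieAlgebra F D]
    (L I : A → D)
    (hspan : Submodule.span F (Set.range L ∪ Set.range I) = ⊤)
    (hLL : ∀ x y : A, ⁅L x, L y⁆ = d (y - x) • L (x + y))
    (hLI : ∀ x y : A, ⁅L x, I y⁆ = d y • I (x + y))
    (hII : ∀ x y : A, ⁅I x, I y⁆ = 0)
    (μ : A →+ F)
    (ξ : D →ₗ[F] D)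
    (hξL : ∀ x : A, ξ (L x) = μ x • L x)
    (hξI : ∀ x : A, ξ (I x) = μ x • I x) :
    (∀ u v : D, ξ ⁅u, v⁆ = ⁅ξ u, v⁆ + ⁅u, ξ v⁆) ∧
    (∀ k : F, (∀ x : A, μ x = k * d x) → ∀ u : D, ξ u = ⁅k • L 0, u⁆) := by
  have hmem : ∀ u : D, u ∈ Submodule.span F (Set.range L ∪ Set.range I) := by
    intro u; rw [hspan]; exact Submodule.mem_top
  have hIL : ∀ x y : A, ⁅I x, L y⁆ = -(d x • I (x + y)) := by
    intro x y
    rw [← lie_skew, hLI]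
    rw [add_comm y x]
  constructor
  · -- Leibniz rule
    -- first: generator against arbitrary v
    have gen : ∀ u ∈ Set.range L ∪ Set.range I, ∀ v : D,
        ξ ⁅u, v⁆ = ⁅ξ u, v⁆ + ⁅u, ξ v⁆ := by
      intro u hu v
      induction hmem v using Submodule.span_induction with
      | mem w hw =>
        rcases hu with ⟨x, rfl⟩ | ⟨x, rfl⟩ <;> rcases hw with ⟨y, rfl⟩ | ⟨y, rfl⟩ <;>
          simp only [hLL, hLI, hII, hIL, hξL, hξI, map_smul, map_neg, map_zero,
            map_add, μ.map_add, lie_smul, smul_lie, smul_neg, lie_zero, zero_lie] <;>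
          module
      | zero => simp
      | add w₁ w₂ _ _ h₁ h₂ => simp only [lie_add, map_add, h₁, h₂]; abel
      | smul c w _ h => simp only [lie_smul, map_smul, h, smul_add]
    intro u v
    induction hmem u using Submodule.span_induction with
    | mem w hw => exact gen w hw v
    | zero => simp
    | add w₁ w₂ _ _ h₁ h₂ => simp only [add_lie, map_add, h₁, h₂]; abel
    | smul c w _ h => simp only [smul_lie, map_smul, h, smul_add]
  · intro k hk u
    induction hmem u using Submodule.span_induction with
    | mem w hw =>
      rcases hw with ⟨x, rfl⟩ | ⟨x, rfl⟩
      · rw [hξL, smul_lie, hLL, sub_zero, zero_add, hk, mul_smul]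
      · rw [hξI, smul_lie, hLI, zero_add, hk, mul_smul]
    | zero => simp
    | add w₁ w₂ _ _ h₁ h₂ => simp only [lie_add, map_add, h₁, h₂]
    | smul c w _ h => simp only [lie_smul, map_smul, h]
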